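/- For every integer q ≥ 1: every finite connected simple graph G with ind-match(G) = 1, min-match(G) = q and match(G) = 2q − 1 has at least (2q choose 2) edges, and there exists a finite connected simple graph G with ind-match(G) = 1, min-match(G) = q, match(G) = 2q − 1 and exactly (2q choose 2) edges. (That is, the minimum number of edges of such graphs is (2q choose 2).) -/

import Mathlib

variable {V : Type*}

/-- A matching of `G`: a set of edges of `G` that are pairwise disjoint. -/
def IsMatchingSet (G : SimpleGraph V) (M : Set (Sym2 V)) : Prop :=
  (∀ e ∈ M, e ∈ G.edgeSet) ∧
    ∀ e ∈ M, ∀ f ∈ M, e ≠ f → ∀ v : V, v ∈ e → v ∉ f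

/-- A maximal matching of `G`: a matching `M` such that `M ∪ {e}` is not a matching
for every edge `e` of `G` not in `M`. -/
def IsMaximalMatchingSet (G : SimpleGraph V) (M : Set (Sym2 V)) : Prop :=
  IsMatchingSet G M ∧
    ∀ e ∈ G.edgeSet, e ∉ M → ¬ IsMatchingSet G (insert e M)

/-- An induced matching of `G`: a matching `M` such that no edge of `G` meets
two distinct edges of `M`. -/
def IsInducedMatchingSet (G : SimpleGraph V) (M : Set (Sym2 V)) : Prop :=
  IsMatchingSet G M ∧
    ∀ e ∈ M, ∀ f ∈ M, e ≠ f → ∀ g ∈ G.edgeSet,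
      ¬ ((∃ v : V, v ∈ g ∧ v ∈ e) ∧ (∃ v : V, v ∈ g ∧ v ∈ f))

/-- The matching number of `G`: the maximum size of a matching. -/
noncomputable def matchNum (G : SimpleGraph V) : ℕ :=
  sSup {n | ∃ M : Set (Sym2 V), IsMatchingSet G M ∧ M.ncard = n}

/-- The minimum matching number of `G`: the minimum size of a maximal matching. -/
noncomputable def minMatchNum (G : SimpleGraph V) : ℕ :=
  sInf {n | ∃ M : Set (Sym2 V), IsMaximalMatchingSet G M ∧ M.ncard = n}

/-- The induced matching number of `G`: the maximum size of an induced matching. -/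
noncomputable def indMatchNum (G : SimpleGraph V) : ℕ :=
  sSup {n | ∃ M : Set (Sym2 V), IsInducedMatchingSet G M ∧ M.ncard = n}

section Helpers

lemma empty_matching (G : SimpleGraph V) : IsMatchingSet G (∅ : Set (Sym2 V)) :=
  ⟨fun e he => absurd he (Set.notMem_empty e), fun e he => absurd he (Set.notMem_empty e)⟩

lemma ncard_le_card {α : Type*} [Finite α] (s : Set α) : s.ncard ≤ Nat.card α := by
  rw [← Nat.card_coe_set_eq]
  exact Nat.card_le_card_of_injective Subtype.val Subtype.coe_injective

lemma matchSet_bddAbove [Finite V] (G : SimpleGraph V) :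
    BddAbove {n | ∃ M : Set (Sym2 V), IsMatchingSet G M ∧ M.ncard = n} := by
  refine ⟨Nat.card (Sym2 V), fun n hn => ?_⟩
  obtain ⟨M, _, rfl⟩ := hn
  exact ncard_le_card M

lemma indSet_bddAbove [Finite V] (G : SimpleGraph V) :
    BddAbove {n | ∃ M : Set (Sym2 V), IsInducedMatchingSet G M ∧ M.ncard = n} := by
  refine ⟨Nat.card (Sym2 V), fun n hn => ?_⟩
  obtain ⟨M, _, rfl⟩ := hn
  exact ncard_le_card M

/-- there is a matching realizing the matching number -/
lemma exists_matching_matchNum [Finite V] (G : SimpleGraph V) :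
    ∃ M : Set (Sym2 V), IsMatchingSet G M ∧ M.ncard = matchNum G := by
  have h := Nat.sSup_mem (s := {n | ∃ M : Set (Sym2 V), IsMatchingSet G M ∧ M.ncard = n})
    ⟨0, ∅, empty_matching G, Set.ncard_empty _⟩ (matchSet_bddAbove G)
  exact h

/-- if indMatchNum G ≤ 1, any two disjoint edges are joined by an edge -/
lemma exists_connecting_edge [Finite V] {G : SimpleGraph V} (hind : indMatchNum G ≤ 1)
    {e f : Sym2 V} (he : e ∈ G.edgeSet) (hf : f ∈ G.edgeSet) (hne : e ≠ f)
    (hdisj : ∀ v : V, v ∈ e → v ∉ f) :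
    ∃ g ∈ G.edgeSet, (∃ v : V, v ∈ g ∧ v ∈ e) ∧ (∃ v : V, v ∈ g ∧ v ∈ f) := by
  by_contra hcon
  have hmem : ({e, f} : Set (Sym2 V)).ncard ∈
      {n | ∃ M : Set (Sym2 V), IsInducedMatchingSet G M ∧ M.ncard = n} := by
    refine ⟨{e, f}, ⟨⟨?_, ?_⟩, ?_⟩, rfl⟩
    · rintro g (rfl | rfl); exact he; exact hf
    · rintro a (rfl | rfl) b (rfl | rfl) hab v hv <;>
        first
        | exact absurd rfl hab
        | exact hdisj v hv
        | exact fun hvb => hdisj v hvb hv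
    · rintro a (rfl | rfl) b (rfl | rfl) hab g hg ⟨⟨v, hv1, hv2⟩, ⟨w, hw1, hw2⟩⟩
      · exact hab rfl
      · exact hcon ⟨g, hg, ⟨v, hv1, hv2⟩, ⟨w, hw1, hw2⟩⟩
      · exact hcon ⟨g, hg, ⟨w, hw1, hw2⟩, ⟨v, hv1, hv2⟩⟩
      · exact hab rfl
  have h2 : ({e, f} : Set (Sym2 V)).ncard = 2 := Set.ncard_pair hne
  have := le_csSup (indSet_bddAbove G) hmem
  rw [h2] at this
  unfold indMatchNum at hind
  omega

/-- every vertex is in at most one edge of a matching, so 2|M| ≤ |V| -/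
lemma two_mul_ncard_matching_le [Finite V] {G : SimpleGraph V} {M : Set (Sym2 V)}
    (hM : IsMatchingSet G M) : 2 * M.ncard ≤ Nat.card V := by
  classical
  have hinj : Function.Injective (fun p : ↥M × Bool =>
      if p.2 then (p.1 : Sym2 V).out.1 else (p.1 : Sym2 V).out.2) := by
    rintro ⟨⟨e, heM⟩, b⟩ ⟨⟨f, hfM⟩, c⟩ h
    simp only at h
    have hme : (if b then e.out.1 else e.out.2) ∈ e := by
      cases b <;> simp [Sym2.out_fst_mem, Sym2.out_snd_mem]
    have hmf : (if c then f.out.1 else f.out.2) ∈ f := by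
      cases c <;> simp [Sym2.out_fst_mem, Sym2.out_snd_mem]
    have hef : e = f := by
      by_contra hef
      exact hM.2 e heM f hfM hef _ hme (h ▸ hmf)
    subst hef
    have hnd : e.out.1 ≠ e.out.2 := by
      have : ¬ e.IsDiag := (SimpleGraph.not_isDiag_of_mem_edgeSet G (hM.1 e heM))
      intro hcontra
      apply this
      rw [← e.out_eq]
      exact hcontra
    cases b <;> cases c <;> simp_all
  have := Nat.card_le_card_of_injective _ hinj
  rw [Nat.card_prod, Nat.card_coe_set_eq, Nat.card_eq_fintype_card (α := Bool), Fintype.card_bool] at this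
  omega

end Helpers

lemma sym2_repr {α : Type*} (g : Sym2 α) : g = s(g.out.1, g.out.2) := by
  conv_lhs => rw [← g.out_eq]

lemma mem_pair_cases {α : Type*} {x y v1 v2 v3 : α} (h1 : v1 = x ∨ v1 = y)
    (h2 : v2 = x ∨ v2 = y) (h3 : v3 = x ∨ v3 = y) (h12 : v1 ≠ v2) : v3 = v1 ∨ v3 = v2 := by
  rcases h1 with rfl | rfl <;> rcases h2 with rfl | rfl <;> rcases h3 with rfl | rfl <;> tauto

lemma part1 (q : ℕ) (hq : 1 ≤ q) (V : Type) [Fintype V] (G : SimpleGraph V)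
    (hind : indMatchNum G = 1) (hmatch : matchNum G = 2 * q - 1) :
    Nat.choose (2 * q) 2 ≤ G.edgeSet.ncard := by
  classical
  obtain ⟨M, hM, hMcard⟩ := exists_matching_matchNum G
  rw [hmatch] at hMcard
  set m := 2 * q - 1 with hm
  haveI : Fintype ↥M := Fintype.ofFinite _
  have hcardM : Fintype.card ↥M = m := by
    rw [← Nat.card_eq_fintype_card, Nat.card_coe_set_eq, hMcard]
  obtain ⟨φ⟩ : Nonempty (Fin m ≃ ↥M) := ⟨(Fintype.equivFinOfCardEq hcardM).symm⟩
  -- shared vertex implies equal matching edges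
  have heq : ∀ (a b : ↥M) (v : V), v ∈ (a : Sym2 V) → v ∈ (b : Sym2 V) → a = b := by
    intro a b v hva hvb
    by_contra hab
    exact hM.2 a.1 a.2 b.1 b.2 (fun h => hab (Subtype.ext h)) v hva hvb
  have hφne : ∀ i j : Fin m, i ≠ j → (φ i : Sym2 V) ≠ (φ j : Sym2 V) := by
    intro i j hij h
    exact hij (φ.injective (Subtype.ext h))
  have hconn : ∀ i j : Fin m, i ≠ j → ∃ g, g ∈ G.edgeSet ∧
      ((∃ v : V, v ∈ g ∧ v ∈ (φ i : Sym2 V)) ∧ (∃ v : V, v ∈ g ∧ v ∈ (φ j : Sym2 V))) := by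
    intro i j hij
    have hdisj : ∀ v : V, v ∈ (φ i : Sym2 V) → v ∉ (φ j : Sym2 V) := by
      intro v hvi hvj
      exact hij (φ.injective (heq _ _ v hvi hvj))
    obtain ⟨g, hg, hA, hB⟩ := exists_connecting_edge (hind.le)
      (hM.1 _ (φ i).2) (hM.1 _ (φ j).2) (hφne i j hij) hdisj
    exact ⟨g, hg, hA, hB⟩
  let c : Fin m → Fin m → Sym2 V := fun i j =>
    if h : i = j then (φ i : Sym2 V) else Classical.choose (hconn i j h)
  let F : Fin m → Fin m → Sym2 V := fun i j => c (min i j) (max i j)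
  have hFsymm : ∀ i j, F i j = F j i := by
    intro i j; simp only [F, min_comm, max_comm]
  have hFdiag : ∀ i, F i i = (φ i : Sym2 V) := by
    intro i; simp [F, c]
  have hFne : ∀ i j : Fin m, i ≠ j → F i j ∈ G.edgeSet ∧
      (∃ v : V, v ∈ F i j ∧ v ∈ (φ i : Sym2 V)) ∧
      (∃ v : V, v ∈ F i j ∧ v ∈ (φ j : Sym2 V)) := by
    intro i j hij
    have hmm : min i j ≠ max i j := by
      rcases le_total i j with h | h
      · rw [min_eq_left h, max_eq_right h]; exact hij
      · rw [min_eq_right h, max_eq_left h]; exact (Ne.symm hij)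
    obtain ⟨hg, hA, hB⟩ := Classical.choose_spec (hconn _ _ hmm)
    set g := Classical.choose (hconn _ _ hmm) with hgdef
    have hF : F i j = g := dif_neg hmm
    rw [hF]
    rcases le_total i j with h | h
    · rw [min_eq_left h] at hA
      rw [max_eq_right h] at hB
      exact ⟨hg, hA, hB⟩
    · rw [min_eq_right h] at hA
      rw [max_eq_left h] at hB
      exact ⟨hg, hB, hA⟩
  -- an edge meeting two distinct matching edges meets no other matching edge
  have hdet : ∀ g : Sym2 V, ∀ a b : ↥M, a ≠ b →
      (∃ v : V, v ∈ g ∧ v ∈ (a : Sym2 V)) → (∃ v : V, v ∈ g ∧ v ∈ (b : Sym2 V)) →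
      ∀ d : ↥M, (∃ v : V, v ∈ g ∧ v ∈ (d : Sym2 V)) → d = a ∨ d = b := by
    intro g a b hab ⟨v1, hv1g, hv1a⟩ ⟨v2, hv2g, hv2b⟩ d ⟨v3, hv3g, hv3d⟩
    have hgrep := sym2_repr g
    rw [hgrep, Sym2.mem_iff] at hv1g hv2g hv3g
    have hv12 : v1 ≠ v2 := by
      intro h; subst h; exact hab (heq a b v1 hv1a hv2b)
    have h3 : v3 = v1 ∨ v3 = v2 := mem_pair_cases hv1g hv2g hv3g hv12
    rcases h3 with h | h
    · subst h; exact Or.inl (heq d a v3 hv3d hv1a)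
    · subst h; exact Or.inr (heq d b v3 hv3d hv2b)
  clear_value F c
  let ψ : Sym2 (Fin m) → Sym2 V := Sym2.lift ⟨F, hFsymm⟩
  have hψ_edge : ∀ s : Sym2 (Fin m), ψ s ∈ G.edgeSet := by
    intro s
    induction s using Sym2.ind with
    | _ i j =>
      show F i j ∈ G.edgeSet
      by_cases h : i = j
      · subst h; rw [hFdiag]; exact hM.1 _ (φ i).2
      · exact (hFne i j h).1
  have hψinj : Function.Injective ψ := by
    intro s t hst
    induction s using Sym2.ind with
    | _ i j =>
    induction t using Sym2.ind with
    | _ k l =>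
    have hst' : F i j = F k l := by
      simpa only [ψ, Sym2.lift_mk] using hst
    by_cases hij : i = j <;> by_cases hkl : k = l
    · subst hij; subst hkl
      rw [hFdiag, hFdiag] at hst'
      rw [φ.injective (Subtype.ext hst')]
    · subst hij
      rw [hFdiag] at hst'
      obtain ⟨hg, ⟨v, hvg, hvk⟩, ⟨w, hwg, hwl⟩⟩ := hFne k l hkl
      rw [← hst'] at hvg hwg
      have h1 : φ i = φ k := heq _ _ v hvg hvk
      have h2 : φ i = φ l := heq _ _ w hwg hwl
      exact absurd (φ.injective (h1 ▸ h2)) hkl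
    · subst hkl
      rw [hFdiag] at hst'
      obtain ⟨hg, ⟨v, hvg, hvi⟩, ⟨w, hwg, hwj⟩⟩ := hFne i j hij
      rw [hst'] at hvg hwg
      have h1 : φ k = φ i := heq _ _ v hvg hvi
      have h2 : φ k = φ j := heq _ _ w hwg hwj
      exact absurd (φ.injective (h1 ▸ h2)) hij
    · obtain ⟨hg, hAi, hAj⟩ := hFne i j hij
      obtain ⟨hg', hAk, hAl⟩ := hFne k l hkl
      rw [← hst'] at hAk hAl
      have hφij : φ i ≠ φ j := fun h => hij (φ.injective h)
      have hk := hdet (F i j) (φ i) (φ j) hφij hAi hAj (φ k) hAk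
      have hl := hdet (F i j) (φ i) (φ j) hφij hAi hAj (φ l) hAl
      have hkl' : φ k ≠ φ l := fun h => hkl (φ.injective h)
      rw [Sym2.eq_iff]
      rcases hk with hk | hk <;> rcases hl with hl | hl
      · exact absurd (hk.trans hl.symm) hkl'
      · exact Or.inl ⟨(φ.injective hk).symm, (φ.injective hl).symm⟩
      · exact Or.inr ⟨(φ.injective hl).symm, (φ.injective hk).symm⟩
      · exact absurd (hk.trans hl.symm) hkl'
  have hinj2 : Function.Injective (fun s : Sym2 (Fin m) => (⟨ψ s, hψ_edge s⟩ : ↥G.edgeSet)) := by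
    intro s t h
    exact hψinj (congrArg Subtype.val h)
  have hcard := Nat.card_le_card_of_injective _ hinj2
  rw [Nat.card_eq_fintype_card (α := Sym2 (Fin m)), Sym2.card, Fintype.card_fin,
    Nat.card_coe_set_eq] at hcard
  have : m + 1 = 2 * q := by omega
  rw [this] at hcard
  exact hcard

section Example

def exGraph (q : ℕ) : SimpleGraph (Fin (4*q-2)) where
  Adj a b := a ≠ b ∧ ((a:ℕ) < 2*q-1 ∧ (b:ℕ) < 2*q-1 ∨
    (b:ℕ) = (a:ℕ) + (2*q-1) ∨ (a:ℕ) = (b:ℕ) + (2*q-1))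
  symm := ⟨by
    rintro a b ⟨h1, h2⟩
    exact ⟨h1.symm, by tauto⟩⟩
  loopless := ⟨fun a h => h.1 rfl⟩

lemma exGraph_adj (q : ℕ) (a b : Fin (4*q-2)) : (exGraph q).Adj a b ↔
    a ≠ b ∧ ((a:ℕ) < 2*q-1 ∧ (b:ℕ) < 2*q-1 ∨
    (b:ℕ) = (a:ℕ) + (2*q-1) ∨ (a:ℕ) = (b:ℕ) + (2*q-1)) := Iff.rfl

/-- every edge of exGraph contains a vertex with value < 2q-1 -/
lemma exGraph_edge_has_x (q : ℕ) (e : Sym2 (Fin (4*q-2))) (he : e ∈ (exGraph q).edgeSet) :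
    ∃ a, a ∈ e ∧ (a:ℕ) < 2*q-1 := by
  induction e using Sym2.ind with
  | _ a b =>
    rw [SimpleGraph.mem_edgeSet, exGraph_adj] at he
    have hb := b.isLt
    have ha := a.isLt
    rcases he.2 with ⟨h1, h2⟩ | h | h
    · exact ⟨a, Sym2.mem_mk_left a b, h1⟩
    · exact ⟨a, Sym2.mem_mk_left a b, by omega⟩
    · exact ⟨b, Sym2.mem_mk_right a b, by omega⟩

lemma exGraph_connected (q : ℕ) (hq : 1 ≤ q) : (exGraph q).Connected := by
  haveI : Nonempty (Fin (4*q-2)) := ⟨⟨0, by omega⟩⟩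
  set x0 : Fin (4*q-2) := ⟨0, by omega⟩ with hx0
  have hreach : ∀ a : Fin (4*q-2), (exGraph q).Reachable a x0 := by
    intro a
    have hax : ∀ c : Fin (4*q-2), (c:ℕ) < 2*q-1 → (exGraph q).Reachable c x0 := by
      intro c hc
      by_cases h : c = x0
      · rw [h]
      · refine SimpleGraph.Adj.reachable ?_
        rw [exGraph_adj]
        exact ⟨h, Or.inl ⟨hc, by simp [hx0]; omega⟩⟩
    by_cases h : (a:ℕ) < 2*q-1
    · exact hax a h
    · have ha := a.isLt
      have hb : (a:ℕ) - (2*q-1) < 2*q-1 := by omega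
      set b : Fin (4*q-2) := ⟨(a:ℕ) - (2*q-1), by omega⟩ with hbdef
      have hadj : (exGraph q).Adj a b := by
        rw [exGraph_adj]
        constructor
        · intro hab
          rw [Fin.ext_iff] at hab
          simp [hbdef] at hab
          omega
        · right; right; simp [hbdef]; omega
      exact hadj.reachable.trans (hax b (by simp [hbdef]; omega))
  exact ⟨fun a b => (hreach a).trans (hreach b).symm⟩

end Example

section Count

variable (q : ℕ)

def emb (i : Fin (2*q-1)) : Fin (4*q-2) := ⟨(i:ℕ), by have := i.isLt; omega⟩

def embY (i : Fin (2*q-1)) : Fin (4*q-2) := ⟨(i:ℕ) + (2*q-1), by have := i.isLt; omega⟩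

def exF (i j : Fin (2*q-1)) : Sym2 (Fin (4*q-2)) :=
  if i = j then s(emb q i, embY q i) else s(emb q i, emb q j)

lemma exF_symm (i j : Fin (2*q-1)) : exF q i j = exF q j i := by
  by_cases h : i = j
  · subst h; rfl
  · rw [exF, exF, if_neg h, if_neg (fun hh => h hh.symm)]
    exact Sym2.eq_swap

noncomputable def exPsi : Sym2 (Fin (2*q-1)) → Sym2 (Fin (4*q-2)) :=
  Sym2.lift ⟨exF q, exF_symm q⟩

lemma exPsi_mk (i j : Fin (2*q-1)) : exPsi q s(i, j) = exF q i j := rfl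

lemma exPsi_inj : Function.Injective (exPsi q) := by
  intro s t hst
  induction s using Sym2.ind with
  | _ i j =>
  induction t using Sym2.ind with
  | _ k l =>
  rw [exPsi_mk, exPsi_mk] at hst
  have him := i.isLt
  have hjm := j.isLt
  have hkm := k.isLt
  have hlm := l.isLt
  rw [exF, exF] at hst
  rw [Sym2.eq_iff]
  by_cases hij : i = j <;> by_cases hkl : k = l <;>
    simp only [if_pos, if_neg, hij, hkl, if_true, if_false] at hst <;>
    rw [Sym2.eq_iff] at hst <;>
    simp only [Fin.ext_iff, emb, embY] at hst ⊢ <;> omega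

lemma exGraph_edgeSet_eq : (exGraph q).edgeSet = Set.range (exPsi q) := by
  ext e
  constructor
  · intro he
    induction e using Sym2.ind with
    | _ a b =>
      rw [SimpleGraph.mem_edgeSet, exGraph_adj] at he
      obtain ⟨hne, hcase⟩ := he
      have ha := a.isLt
      have hb := b.isLt
      rcases hcase with ⟨h1, h2⟩ | h | h
      · refine ⟨s(⟨(a:ℕ), h1⟩, ⟨(b:ℕ), h2⟩), ?_⟩
        rw [exPsi_mk, exF, if_neg (by simp [Fin.ext_iff]; exact fun hh => hne (Fin.ext hh))]
        simp [emb, Sym2.eq_iff, Fin.ext_iff]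
      · have h1 : (a:ℕ) < 2*q-1 := by omega
        refine ⟨s(⟨(a:ℕ), h1⟩, ⟨(a:ℕ), h1⟩), ?_⟩
        rw [exPsi_mk, exF, if_pos rfl]
        simp [emb, embY, Sym2.eq_iff, Fin.ext_iff]
        omega
      · have h1 : (b:ℕ) < 2*q-1 := by omega
        refine ⟨s(⟨(b:ℕ), h1⟩, ⟨(b:ℕ), h1⟩), ?_⟩
        rw [exPsi_mk, exF, if_pos rfl]
        simp [emb, embY, Sym2.eq_iff, Fin.ext_iff]
        omega
  · rintro ⟨s, rfl⟩
    induction s using Sym2.ind with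
    | _ i j =>
      rw [exPsi_mk, exF]
      have him := i.isLt
      have hjm := j.isLt
      by_cases h : i = j
      · rw [if_pos h]
        rw [SimpleGraph.mem_edgeSet, exGraph_adj]
        constructor
        · simp [emb, embY, Fin.ext_iff]; omega
        · right; left; simp [emb, embY]
      · rw [if_neg h]
        rw [SimpleGraph.mem_edgeSet, exGraph_adj]
        constructor
        · simp only [Fin.ext_iff, emb, Ne] at h ⊢
          exact h
        · exact Or.inl ⟨him, hjm⟩

lemma exGraph_ncard (hq : 1 ≤ q) : (exGraph q).edgeSet.ncard = Nat.choose (2*q) 2 := by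
  rw [exGraph_edgeSet_eq, ← Nat.card_coe_set_eq, Nat.card_range_of_injective (exPsi_inj q),
    Nat.card_eq_fintype_card, Sym2.card, Fintype.card_fin]
  congr 1
  omega

end Count

section MatchInd

variable (q : ℕ)

lemma exGraph_perfect_matching :
    IsMatchingSet (exGraph q) (Set.range (fun i : Fin (2*q-1) => s(emb q i, embY q i))) := by
  constructor
  · rintro e ⟨i, rfl⟩
    rw [SimpleGraph.mem_edgeSet, exGraph_adj]
    have := i.isLt
    constructor
    · simp [emb, embY, Fin.ext_iff]; omega
    · right; left; simp [emb, embY]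
  · rintro e ⟨i, rfl⟩ f ⟨j, rfl⟩ hne v hv hv'
    have := i.isLt
    have := j.isLt
    simp only [Sym2.mem_iff, Fin.ext_iff, emb, embY] at hv hv'
    have hij : (i:ℕ) = (j:ℕ) := by omega
    have : i = j := Fin.ext hij
    exact hne (by rw [this])

lemma exGraph_matchNum (hq : 1 ≤ q) : matchNum (exGraph q) = 2*q - 1 := by
  unfold matchNum
  apply le_antisymm
  · apply csSup_le
    · exact ⟨0, ∅, empty_matching _, Set.ncard_empty _⟩
    rintro n ⟨M, hM, rfl⟩
    have := two_mul_ncard_matching_le hM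
    rw [Nat.card_eq_fintype_card, Fintype.card_fin] at this
    omega
  · apply le_csSup (matchSet_bddAbove _)
    refine ⟨_, exGraph_perfect_matching q, ?_⟩
    rw [← Nat.card_coe_set_eq, Nat.card_range_of_injective, Nat.card_eq_fintype_card,
      Fintype.card_fin]
    intro i j hij
    have := i.isLt
    have := j.isLt
    have hij' : s(emb q i, embY q i) = s(emb q j, embY q j) := hij
    have : emb q i ∈ s(emb q j, embY q j) := hij' ▸ Sym2.mem_mk_left _ _
    simp only [Sym2.mem_iff, Fin.ext_iff, emb, embY] at this
    exact Fin.ext (by omega)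

lemma exGraph_indMatchNum (hq : 1 ≤ q) : indMatchNum (exGraph q) = 1 := by
  have h0 : (0:ℕ) < 2*q-1 := by omega
  set i0 : Fin (2*q-1) := ⟨0, h0⟩
  set e0 : Sym2 (Fin (4*q-2)) := s(emb q i0, embY q i0) with he0
  have he0edge : e0 ∈ (exGraph q).edgeSet := by
    rw [SimpleGraph.mem_edgeSet, exGraph_adj]
    constructor
    · simp [emb, embY, Fin.ext_iff]; omega
    · right; left; simp [emb, embY]
  unfold indMatchNum
  apply le_antisymm
  · apply csSup_le
    · exact ⟨1, {e0}, ⟨⟨fun e he => by rwa [he], fun e he f hf hne => absurd (he.trans hf.symm) hne⟩,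
        fun e he f hf hne => absurd (he.trans hf.symm) hne⟩, Set.ncard_singleton _⟩
    rintro n ⟨M, hM, rfl⟩
    have hsub : M.Subsingleton := by
      intro e he f hf
      by_contra hne
      obtain ⟨a, hae, ha⟩ := exGraph_edge_has_x q e (hM.1.1 e he)
      obtain ⟨b, hbf, hb⟩ := exGraph_edge_has_x q f (hM.1.1 f hf)
      have hab : a ≠ b := by
        intro h; subst h
        exact hM.1.2 e he f hf hne a hae hbf
      have hg : s(a, b) ∈ (exGraph q).edgeSet := by
        rw [SimpleGraph.mem_edgeSet, exGraph_adj]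
        exact ⟨hab, Or.inl ⟨ha, hb⟩⟩
      exact hM.2 e he f hf hne s(a,b) hg
        ⟨⟨a, Sym2.mem_mk_left a b, hae⟩, ⟨b, Sym2.mem_mk_right a b, hbf⟩⟩
    exact (Set.ncard_le_one (Set.toFinite M)).mpr (fun a ha b hb => hsub ha hb)
  · apply le_csSup (indSet_bddAbove _)
    exact ⟨{e0}, ⟨⟨fun e he => by rwa [he], fun e he f hf hne => absurd (he.trans hf.symm) hne⟩,
      fun e he f hf hne => absurd (he.trans hf.symm) hne⟩, Set.ncard_singleton _⟩

end MatchInd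

section MinMatch

variable (q : ℕ)

def f0 (i : Fin q) : Sym2 (Fin (4*q-2)) :=
  if h : (i:ℕ)+1 < q then
    s(⟨2*(i:ℕ), by omega⟩, ⟨2*(i:ℕ)+1, by omega⟩)
  else
    s(⟨2*q-2, by have := i.isLt; omega⟩, ⟨4*q-3, by have := i.isLt; omega⟩)

lemma f0_mem_val (i : Fin q) (v : Fin (4*q-2)) (hv : v ∈ f0 q i) :
    ((i:ℕ)+1 < q ∧ ((v:ℕ) = 2*(i:ℕ) ∨ (v:ℕ) = 2*(i:ℕ)+1)) ∨
      (¬((i:ℕ)+1 < q) ∧ ((v:ℕ) = 2*q-2 ∨ (v:ℕ) = 4*q-3)) := by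
  by_cases h : (i:ℕ)+1 < q
  · rw [f0, dif_pos h] at hv
    rw [Sym2.mem_iff] at hv
    left
    exact ⟨h, by rcases hv with h' | h' <;> [left; right] <;> rw [h']⟩
  · rw [f0, dif_neg h] at hv
    rw [Sym2.mem_iff] at hv
    right
    exact ⟨h, by rcases hv with h' | h' <;> [left; right] <;> rw [h']⟩

lemma f0_covers (a : Fin (4*q-2)) (ha : (a:ℕ) < 2*q-1) : ∃ j : Fin q, a ∈ f0 q j := by
  have hq : 1 ≤ q := by have := a.isLt; omega
  by_cases h : (a:ℕ) = 2*q-2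
  · refine ⟨⟨q-1, by omega⟩, ?_⟩
    rw [f0, dif_neg (by simp; omega)]
    rw [Sym2.mem_iff]
    left; exact Fin.ext h
  · have ha2 : (a:ℕ) < 2*q-2 := by omega
    refine ⟨⟨(a:ℕ)/2, by omega⟩, ?_⟩
    rw [f0, dif_pos (by simp; omega)]
    rw [Sym2.mem_iff]
    simp only [Fin.ext_iff]
    omega

lemma f0_maximal : IsMaximalMatchingSet (exGraph q) (Set.range (f0 q)) := by
  constructor
  · constructor
    · rintro e ⟨i, rfl⟩
      have hiq := i.isLt
      by_cases h : (i:ℕ)+1 < q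
      · rw [f0, dif_pos h, SimpleGraph.mem_edgeSet, exGraph_adj]
        constructor
        · simp [Fin.ext_iff]
        · left; constructor <;> simp <;> omega
      · rw [f0, dif_neg h, SimpleGraph.mem_edgeSet, exGraph_adj]
        constructor
        · simp [Fin.ext_iff]; omega
        · right; left; simp; omega
    · rintro e ⟨i, rfl⟩ f ⟨j, rfl⟩ hne v hv hv'
      have hiq := i.isLt
      have hjq := j.isLt
      have h1 := f0_mem_val q i v hv
      have h2 := f0_mem_val q j v hv'
      have hij : (i:ℕ) = (j:ℕ) := by omega
      exact hne (by rw [Fin.ext hij])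
  · rintro e he hem hmat
    obtain ⟨a, hae, ha⟩ := exGraph_edge_has_x q e he
    obtain ⟨j, haj⟩ := f0_covers q a ha
    have hne : e ≠ f0 q j := fun h => hem (h ▸ ⟨j, rfl⟩)
    exact hmat.2 e (Set.mem_insert _ _) (f0 q j)
      (Set.mem_insert_of_mem _ ⟨j, rfl⟩) hne a hae haj

lemma f0_inj : Function.Injective (f0 q) := by
  intro i j hij
  have hiq := i.isLt
  have hjq := j.isLt
  by_cases hi : (i:ℕ)+1 < q <;> by_cases hj : (j:ℕ)+1 < q
  · have : (⟨2*(i:ℕ), by omega⟩ : Fin (4*q-2)) ∈ f0 q j := by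
      rw [← hij, f0, dif_pos hi, Sym2.mem_iff]; left; rfl
    have := f0_mem_val q j _ this
    simp only at this
    exact Fin.ext (by omega)
  · have : (⟨2*(i:ℕ), by omega⟩ : Fin (4*q-2)) ∈ f0 q j := by
      rw [← hij, f0, dif_pos hi, Sym2.mem_iff]; left; rfl
    have := f0_mem_val q j _ this
    simp only at this
    omega
  · have : (⟨2*(j:ℕ), by omega⟩ : Fin (4*q-2)) ∈ f0 q i := by
      rw [hij, f0, dif_pos hj, Sym2.mem_iff]; left; rfl
    have := f0_mem_val q i _ this
    simp only at this
    omega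
  · exact Fin.ext (by omega)

lemma exGraph_y_partner (e : Sym2 (Fin (4*q-2))) (he : e ∈ (exGraph q).edgeSet)
    (b : Fin (4*q-2)) (hb : b ∈ e) (hbv : 2*q-1 ≤ (b:ℕ)) :
    ∃ a, a ∈ e ∧ (a:ℕ) + (2*q-1) = (b:ℕ) := by
  induction e using Sym2.ind with
  | _ u w =>
    rw [SimpleGraph.mem_edgeSet, exGraph_adj] at he
    have hu := u.isLt
    have hw := w.isLt
    rw [Sym2.mem_iff] at hb
    rcases hb with rfl | rfl
    · rcases he.2 with ⟨h1, h2⟩ | h | h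
      · omega
      · omega
      · exact ⟨w, Sym2.mem_mk_right _ _, by omega⟩
    · rcases he.2 with ⟨h1, h2⟩ | h | h
      · omega
      · exact ⟨u, Sym2.mem_mk_left _ _, by omega⟩
      · omega

lemma exGraph_maximal_ge (hq : 1 ≤ q) (M : Set (Sym2 (Fin (4*q-2))))
    (hM : IsMaximalMatchingSet (exGraph q) M) : q ≤ M.ncard := by
  classical
  by_contra hlt
  push_neg at hlt
  -- step 1 : some x-vertex is uncovered
  have huncov : ∃ a : Fin (4*q-2), (a:ℕ) < 2*q-1 ∧ ∀ e ∈ M, a ∉ e := by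
    by_contra hcov
    push_neg at hcov
    have hcov' : ∀ i : Fin (2*q-1), ∃ e : ↥M, emb q i ∈ (e : Sym2 (Fin (4*q-2))) := by
      intro i
      obtain ⟨e, he, hmem⟩ := hcov (emb q i) i.isLt
      exact ⟨⟨e, he⟩, hmem⟩
    choose cov hcovmem using hcov'
    have hinj : Function.Injective (fun i : Fin (2*q-1) =>
        ((cov i, decide ((emb q i) = ((cov i : Sym2 (Fin (4*q-2)))).out.1)) : ↥M × Bool)) := by
      intro i j hij
      simp only [Prod.mk.injEq] at hij
      obtain ⟨h1, h2⟩ := hij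
      have hmemi := hcovmem i
      have hmemj := hcovmem j
      rw [h1] at hmemi h2
      have hrep := sym2_repr ((cov j : Sym2 (Fin (4*q-2))))
      rw [hrep, Sym2.mem_iff] at hmemi hmemj
      have heq : emb q i = emb q j := by
        by_cases hc : emb q i = ((cov j : Sym2 (Fin (4*q-2)))).out.1
      -- decide values equal
        · have : decide ((emb q j) = ((cov j : Sym2 (Fin (4*q-2)))).out.1) = true := by
            rw [← h2]; exact decide_eq_true hc
          have hc' := of_decide_eq_true this
          rw [hc, hc']
        · have : decide ((emb q j) = ((cov j : Sym2 (Fin (4*q-2)))).out.1) = false := by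
            rw [← h2]; exact decide_eq_false hc
          have hc' := of_decide_eq_false this
          rcases hmemi with h | h
          · exact absurd h hc
          · rcases hmemj with h' | h'
            · exact absurd h' hc'
            · rw [h, h']
      have : (i:ℕ) = (j:ℕ) := by
        have := congrArg Fin.val heq
        simpa [emb] using this
      exact Fin.ext this
    have hcard := Nat.card_le_card_of_injective _ hinj
    rw [Nat.card_eq_fintype_card (α := Fin (2*q-1)), Fintype.card_fin, Nat.card_prod,
      Nat.card_coe_set_eq, Nat.card_eq_fintype_card (α := Bool), Fintype.card_bool] at hcard
    omega
  obtain ⟨a, ha, hauncov⟩ := huncov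
  -- step 2 : partner b is uncovered
  set b : Fin (4*q-2) := ⟨(a:ℕ) + (2*q-1), by have := a.isLt; omega⟩ with hbdef
  have hbuncov : ∀ e ∈ M, b ∉ e := by
    intro e he hbe
    obtain ⟨a', ha'e, ha'⟩ := exGraph_y_partner q e (hM.1.1 e he) b hbe (by simp [hbdef])
    have : a' = a := Fin.ext (by simp [hbdef] at ha'; omega)
    rw [this] at ha'e
    exact hauncov e he ha'e
  -- step 3 : insert the edge
  have henew : s(a, b) ∈ (exGraph q).edgeSet := by
    rw [SimpleGraph.mem_edgeSet, exGraph_adj]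
    constructor
    · simp [Fin.ext_iff, hbdef]; omega
    · right; left; simp [hbdef]
  have hnotmem : s(a, b) ∉ M := fun h => hauncov _ h (Sym2.mem_mk_left a b)
  apply hM.2 s(a,b) henew hnotmem
  constructor
  · rintro e (rfl | he)
    · exact henew
    · exact hM.1.1 e he
  · rintro e (rfl | he) f (rfl | hf) hne v hv hv'
    · exact hne rfl
    · rw [Sym2.mem_iff] at hv
      rcases hv with rfl | rfl
      · exact hauncov f hf hv'
      · exact hbuncov f hf hv'
    · rw [Sym2.mem_iff] at hv'
      rcases hv' with rfl | rfl
      · exact hauncov e he hv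
      · exact hbuncov e he hv
    · exact hM.1.2 e he f hf hne v hv hv'

lemma exGraph_minMatchNum (hq : 1 ≤ q) : minMatchNum (exGraph q) = q := by
  unfold minMatchNum
  have hmem : q ∈ {n | ∃ M : Set (Sym2 (Fin (4*q-2))), IsMaximalMatchingSet (exGraph q) M ∧ M.ncard = n} := by
    refine ⟨Set.range (f0 q), f0_maximal q, ?_⟩
    rw [← Nat.card_coe_set_eq, Nat.card_range_of_injective (f0_inj q),
      Nat.card_eq_fintype_card, Fintype.card_fin]
  apply le_antisymm
  · exact Nat.sInf_le hmem
  · apply le_csInf ⟨q, hmem⟩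
    rintro n ⟨M, hM, rfl⟩
    exact exGraph_maximal_ge q hq M hM

end MinMatch

theorem stmt_7 (q : ℕ) (hq : 1 ≤ q) :
    (∀ (V : Type) [Fintype V] (G : SimpleGraph V), G.Connected →
      indMatchNum G = 1 → minMatchNum G = q → matchNum G = 2 * q - 1 →
      Nat.choose (2 * q) 2 ≤ G.edgeSet.ncard) ∧
    (∃ (n : ℕ) (G : SimpleGraph (Fin n)), G.Connected ∧
      indMatchNum G = 1 ∧ minMatchNum G = q ∧ matchNum G = 2 * q - 1 ∧
      G.edgeSet.ncard = Nat.choose (2 * q) 2) := by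
  constructor
  · intro V _ G _ hind _ hmatch
    exact part1 q hq V G hind hmatch
  · exact ⟨4*q-2, exGraph q, exGraph_connected q hq, exGraph_indMatchNum q hq,
      exGraph_minMatchNum q hq, exGraph_matchNum q hq, exGraph_ncard q hq⟩
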